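/- Suppose y₁(t) and y₂(t) are two bounded sequences taking values in ℝⁿ satisfying Σ_{t=1}^{∞} ‖y₁(t) − y₂(t)‖ < ∞. Then y₁(t) is sufficiently rich of order p if and only if y₂(t) is sufficiently rich of order p. -/

import Mathlib

open Finset

/-- The stacked block ξ_m(t) = [x(t+1), …, x(t+m)]ᵀ of an ℝⁿ-valued sequence. -/
def srBlock {n : ℕ} (x : ℕ → Fin n → ℝ) (m : ℕ) (t : ℕ) : Fin m × Fin n → ℝ :=
  fun q => x (t + 1 + (q.1 : ℕ)) q.2

/-- A sequence x(t) ∈ ℝⁿ is sufficiently rich of order m (in N steps) if there exist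
N ∈ ℤ⁺ and α > 0 such that Σ_{t=t₀+1}^{t₀+N} ξ_m(t) ξ_m(t)ᵀ ≥ α I uniformly in t₀. -/
def SuffRich {n : ℕ} (x : ℕ → Fin n → ℝ) (m : ℕ) : Prop :=
  ∃ N : ℕ, 0 < N ∧ ∃ α : ℝ, 0 < α ∧ ∀ t0 : ℕ,
    ((∑ t ∈ Finset.Icc (t0 + 1) (t0 + N),
        Matrix.vecMulVec (srBlock x m t) (srBlock x m t)) -
      α • (1 : Matrix (Fin m × Fin n) (Fin m × Fin n) ℝ)).PosSemidef

open Matrix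

lemma mySum_mulVec {k : Type} [Fintype k] (S : Finset ℕ) (A : ℕ → Matrix k k ℝ) (v : k → ℝ) :
    (∑ t ∈ S, A t) *ᵥ v = ∑ t ∈ S, A t *ᵥ v := by
  induction S using Finset.cons_induction with
  | empty => simp [Matrix.zero_mulVec]
  | cons a s ha ih => rw [Finset.sum_cons, Finset.sum_cons, Matrix.add_mulVec, ih]

lemma myDot_sum {k : Type} [Fintype k] (S : Finset ℕ) (f : ℕ → k → ℝ) (v : k → ℝ) :
    v ⬝ᵥ (∑ t ∈ S, f t) = ∑ t ∈ S, v ⬝ᵥ f t := by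
  induction S using Finset.cons_induction with
  | empty => simp
  | cons a s ha ih => rw [Finset.sum_cons, Finset.sum_cons, dotProduct_add, ih]

lemma myVecMulVec_mulVec {k : Type} [Fintype k] (a v : k → ℝ) :
    (Matrix.vecMulVec a a) *ᵥ v = (a ⬝ᵥ v) • a := by
  ext i
  simp [Matrix.mulVec, Matrix.vecMulVec_apply, dotProduct, Finset.mul_sum, mul_comm,
    mul_left_comm]

lemma myQuad {k : Type} [Fintype k] [DecidableEq k] (S : Finset ℕ) (a : ℕ → k → ℝ) (α : ℝ)
    (v : k → ℝ) :
    v ⬝ᵥ (((∑ t ∈ S, Matrix.vecMulVec (a t) (a t)) - α • 1) *ᵥ v)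
      = (∑ t ∈ S, (a t ⬝ᵥ v) ^ 2) - α * (v ⬝ᵥ v) := by
  rw [Matrix.sub_mulVec, dotProduct_sub, mySum_mulVec, myDot_sum]
  congr 1
  · refine Finset.sum_congr rfl fun t _ => ?_
    rw [myVecMulVec_mulVec, dotProduct_smul, smul_eq_mul, dotProduct_comm]
    ring
  · rw [Matrix.smul_mulVec, Matrix.one_mulVec, dotProduct_smul, smul_eq_mul]

lemma myHerm {k : Type} [Fintype k] [DecidableEq k] (S : Finset ℕ) (a : ℕ → k → ℝ) (α : ℝ) :
    (((∑ t ∈ S, Matrix.vecMulVec (a t) (a t)) - α • 1) : Matrix k k ℝ).IsHermitian := by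
  unfold Matrix.IsHermitian
  rw [Matrix.conjTranspose_sub, Matrix.conjTranspose_smul, Matrix.conjTranspose_sum]
  congr 1
  · refine Finset.sum_congr rfl fun t _ => ?_
    ext i j
    simp [Matrix.vecMulVec_apply, mul_comm, Matrix.conjTranspose_apply]
  · simp

lemma myTransfer (n p : ℕ) (y1 y2 : ℕ → Fin n → ℝ)
    (C1 : ℝ) (hy1 : ∀ t, ‖y1 t‖ ≤ C1)
    (C2 : ℝ) (hy2 : ∀ t, ‖y2 t‖ ≤ C2)
    (hsum : Summable fun t => ‖y1 t - y2 t‖) :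
    SuffRich y1 p → SuffRich y2 p := by
  rintro ⟨N, hN, α, hα, h⟩
  set a : ℕ → Fin p × Fin n → ℝ := srBlock y1 p with ha
  set b : ℕ → Fin p × Fin n → ℝ := srBlock y2 p with hb
  set d : ℕ → ℝ := fun s => ‖y1 s - y2 s‖ with hd
  have hd0 : ∀ s, 0 ≤ d s := fun s => norm_nonneg _
  have hC1 : 0 ≤ C1 := le_trans (norm_nonneg _) (hy1 0)
  have hC2 : 0 ≤ C2 := le_trans (norm_nonneg _) (hy2 0)
  set K : ℝ := (n : ℝ) * (C1 + C2) with hKdef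
  have hK : 0 ≤ K := by positivity
  set D : ℝ := K * ((p : ℝ) * n) * p with hDdef
  have hD : 0 ≤ D := by positivity
  set ε : ℝ := α / (2 * (D + 1)) with hεdef
  have hε : 0 < ε := by positivity
  obtain ⟨s₀, hs₀⟩ := hsum.vanishing (Iio_mem_nhds hε)
  set T : ℕ := s₀.sup id + 1 with hT
  have hvan : ∀ (t : Finset ℕ), (∀ s ∈ t, T ≤ s) → ∑ s ∈ t, d s < ε := by
    intro t ht
    have hdisj : Disjoint t s₀ := Finset.disjoint_left.mpr fun s hs hss => by
      have h1 := Finset.le_sup (f := id) hss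
      have h2 := ht s hs
      simp only [id] at h1
      omega
    simpa using hs₀ t hdisj
  refine ⟨T + N, by omega, α / 2, by positivity, fun t0 => ?_⟩
  refine posSemidef_iff_dotProduct_mulVec.mpr ⟨myHerm _ _ _, fun v => ?_⟩
  rw [star_trivial, myQuad, sub_nonneg]
  set S : ℝ := ∑ q : Fin p × Fin n, |v q| with hS
  have hS0 : 0 ≤ S := Finset.sum_nonneg fun q _ => abs_nonneg _
  have habs_v : ∀ q, |v q| ≤ S := fun q =>
    Finset.single_le_sum (fun q _ => abs_nonneg (v q)) (Finset.mem_univ q)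
  have hvv : v ⬝ᵥ v = ∑ q : Fin p × Fin n, v q ^ 2 := by
    simp [dotProduct, sq]
  have hvv0 : 0 ≤ v ⬝ᵥ v := by rw [hvv]; positivity
  have hS2 : S ^ 2 ≤ ((p : ℝ) * n) * (v ⬝ᵥ v) := by
    have := sq_sum_le_card_mul_sum_sq (s := (Finset.univ : Finset (Fin p × Fin n)))
      (f := fun q => |v q|)
    simp only [Finset.card_univ, Fintype.card_prod, Fintype.card_fin, sq_abs] at this
    rw [hvv]
    calc S ^ 2 ≤ ((p * n : ℕ) : ℝ) * ∑ q : Fin p × Fin n, v q ^ 2 := by exact_mod_cast this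
      _ = ((p : ℝ) * n) * ∑ q : Fin p × Fin n, v q ^ 2 := by push_cast; ring
  -- per-component bounds
  have hb1 : ∀ t q, |a t q| ≤ C1 := fun t q => by
    calc |a t q| = ‖y1 (t + 1 + (q.1 : ℕ)) q.2‖ := (Real.norm_eq_abs _).symm
      _ ≤ ‖y1 (t + 1 + (q.1 : ℕ))‖ := norm_le_pi_norm _ _
      _ ≤ C1 := hy1 _
  have hb2 : ∀ t q, |b t q| ≤ C2 := fun t q => by
    calc |b t q| = ‖y2 (t + 1 + (q.1 : ℕ)) q.2‖ := (Real.norm_eq_abs _).symm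
      _ ≤ ‖y2 (t + 1 + (q.1 : ℕ))‖ := norm_le_pi_norm _ _
      _ ≤ C2 := hy2 _
  have hbd : ∀ t q, |a t q - b t q| ≤ d (t + 1 + (q.1 : ℕ)) := fun t q => by
    have : a t q - b t q = (y1 (t + 1 + (q.1:ℕ)) - y2 (t + 1 + (q.1:ℕ))) q.2 := by
      simp [ha, hb, srBlock]
    rw [this, ← Real.norm_eq_abs]
    exact norm_le_pi_norm _ _
  set E : ℕ → ℝ := fun t => ∑ j : Fin p, d (t + 1 + (j : ℕ)) with hE
  have hE0 : ∀ t, 0 ≤ E t := fun t => Finset.sum_nonneg fun j _ => hd0 _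
  -- dot product bounds
  have hdot1 : ∀ t, |a t ⬝ᵥ v| ≤ C1 * S := by
    intro t
    calc |a t ⬝ᵥ v| ≤ ∑ q : Fin p × Fin n, |a t q * v q| := Finset.abs_sum_le_sum_abs _ _
      _ ≤ ∑ q : Fin p × Fin n, C1 * |v q| := Finset.sum_le_sum fun q _ => by
          rw [abs_mul]; exact mul_le_mul_of_nonneg_right (hb1 t q) (abs_nonneg _)
      _ = C1 * S := by rw [hS, Finset.mul_sum]
  have hdot2 : ∀ t, |b t ⬝ᵥ v| ≤ C2 * S := by
    intro t
    calc |b t ⬝ᵥ v| ≤ ∑ q : Fin p × Fin n, |b t q * v q| := Finset.abs_sum_le_sum_abs _ _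
      _ ≤ ∑ q : Fin p × Fin n, C2 * |v q| := Finset.sum_le_sum fun q _ => by
          rw [abs_mul]; exact mul_le_mul_of_nonneg_right (hb2 t q) (abs_nonneg _)
      _ = C2 * S := by rw [hS, Finset.mul_sum]
  have hdotd : ∀ t, |a t ⬝ᵥ v - b t ⬝ᵥ v| ≤ ((n : ℝ) * E t) * S := by
    intro t
    have h1 : a t ⬝ᵥ v - b t ⬝ᵥ v = ∑ q : Fin p × Fin n, (a t q - b t q) * v q := by
      rw [dotProduct, dotProduct, ← Finset.sum_sub_distrib]
      exact Finset.sum_congr rfl fun q _ => by ring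
    rw [h1]
    calc |∑ q : Fin p × Fin n, (a t q - b t q) * v q|
        ≤ ∑ q : Fin p × Fin n, |(a t q - b t q) * v q| := Finset.abs_sum_le_sum_abs _ _
      _ ≤ ∑ q : Fin p × Fin n, d (t + 1 + (q.1 : ℕ)) * S := Finset.sum_le_sum fun q _ => by
          rw [abs_mul]
          exact mul_le_mul (hbd t q) (habs_v q) (abs_nonneg _) (hd0 _)
      _ = ((n : ℝ) * E t) * S := by
          rw [← Finset.sum_mul]
          congr 1
          rw [Fintype.sum_prod_type, hE, Finset.mul_sum]
          exact Finset.sum_congr rfl fun j _ => by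
            simp [Finset.sum_const, mul_comm]
  -- per-t quadratic difference bound
  have hq : ∀ t, (a t ⬝ᵥ v) ^ 2 - (b t ⬝ᵥ v) ^ 2 ≤ K * E t * S ^ 2 := by
    intro t
    have h2 : |a t ⬝ᵥ v + b t ⬝ᵥ v| ≤ (C1 + C2) * S := by
      calc |a t ⬝ᵥ v + b t ⬝ᵥ v| ≤ |a t ⬝ᵥ v| + |b t ⬝ᵥ v| := abs_add_le _ _
        _ ≤ C1 * S + C2 * S := add_le_add (hdot1 t) (hdot2 t)
        _ = (C1 + C2) * S := by ring
    calc (a t ⬝ᵥ v) ^ 2 - (b t ⬝ᵥ v) ^ 2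
        = (a t ⬝ᵥ v - b t ⬝ᵥ v) * (a t ⬝ᵥ v + b t ⬝ᵥ v) := by ring
      _ ≤ |(a t ⬝ᵥ v - b t ⬝ᵥ v) * (a t ⬝ᵥ v + b t ⬝ᵥ v)| := le_abs_self _
      _ = |a t ⬝ᵥ v - b t ⬝ᵥ v| * |a t ⬝ᵥ v + b t ⬝ᵥ v| := abs_mul _ _
      _ ≤ (((n : ℝ) * E t) * S) * ((C1 + C2) * S) := by
          refine mul_le_mul (hdotd t) h2 (abs_nonneg _) ?_
          positivity
      _ = K * E t * S ^ 2 := by rw [hKdef]; ring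
  -- window subset and tail estimates
  set u := t0 + T with hu
  have hsub : Finset.Icc (u + 1) (u + N) ⊆ Finset.Icc (t0 + 1) (t0 + (T + N)) :=
    Finset.Icc_subset_Icc (by omega) (by omega)
  have hEsum : ∑ t ∈ Finset.Icc (u + 1) (u + N), E t ≤ (p : ℝ) * ε := by
    calc ∑ t ∈ Finset.Icc (u + 1) (u + N), E t
        = ∑ j : Fin p, ∑ t ∈ Finset.Icc (u + 1) (u + N), d (t + 1 + (j : ℕ)) :=
          Finset.sum_comm
      _ ≤ ∑ _j : Fin p, ε := by
          refine Finset.sum_le_sum fun j _ => ?_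
          have hinj : ∀ x ∈ Finset.Icc (u + 1) (u + N), ∀ y ∈ Finset.Icc (u + 1) (u + N),
              x + 1 + (j : ℕ) = y + 1 + (j : ℕ) → x = y := by
            intro x _ y _ hxy; omega
          rw [← Finset.sum_image (g := fun t => t + 1 + (j : ℕ)) (f := d) hinj]
          refine le_of_lt (hvan _ fun s hs => ?_)
          simp only [Finset.mem_image, Finset.mem_Icc] at hs
          obtain ⟨t, ht, rfl⟩ := hs
          omega
      _ = (p : ℝ) * ε := by simp [mul_comm]
  have hQ1 : α * (v ⬝ᵥ v) ≤ ∑ t ∈ Finset.Icc (u + 1) (u + N), (a t ⬝ᵥ v) ^ 2 := by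
    have h2 := (h u).dotProduct_mulVec_nonneg v
    rw [star_trivial, myQuad, sub_nonneg] at h2
    exact h2
  have hQ12 : (∑ t ∈ Finset.Icc (u + 1) (u + N), (a t ⬝ᵥ v) ^ 2) -
      (∑ t ∈ Finset.Icc (u + 1) (u + N), (b t ⬝ᵥ v) ^ 2) ≤ K * S ^ 2 * ((p : ℝ) * ε) := by
    rw [← Finset.sum_sub_distrib]
    calc ∑ t ∈ Finset.Icc (u + 1) (u + N), ((a t ⬝ᵥ v) ^ 2 - (b t ⬝ᵥ v) ^ 2)
        ≤ ∑ t ∈ Finset.Icc (u + 1) (u + N), K * E t * S ^ 2 :=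
          Finset.sum_le_sum fun t _ => hq t
      _ = K * S ^ 2 * ∑ t ∈ Finset.Icc (u + 1) (u + N), E t := by
          rw [Finset.mul_sum]; exact Finset.sum_congr rfl fun t _ => by ring
      _ ≤ K * S ^ 2 * ((p : ℝ) * ε) := by
          refine mul_le_mul_of_nonneg_left hEsum ?_
          positivity
  have hbig : ∑ t ∈ Finset.Icc (u + 1) (u + N), (b t ⬝ᵥ v) ^ 2 ≤
      ∑ t ∈ Finset.Icc (t0 + 1) (t0 + (T + N)), (b t ⬝ᵥ v) ^ 2 :=
    Finset.sum_le_sum_of_subset_of_nonneg hsub fun t _ _ => sq_nonneg _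
  have h1 : K * S ^ 2 * ((p : ℝ) * ε) ≤ K * (((p : ℝ) * n) * (v ⬝ᵥ v)) * ((p : ℝ) * ε) := by
    refine mul_le_mul_of_nonneg_right (mul_le_mul_of_nonneg_left hS2 hK) ?_
    positivity
  have h2 : K * (((p : ℝ) * n) * (v ⬝ᵥ v)) * ((p : ℝ) * ε) = D * ε * (v ⬝ᵥ v) := by
    rw [hDdef]; ring
  have h3 : D * ε * (v ⬝ᵥ v) ≤ (D + 1) * ε * (v ⬝ᵥ v) :=
    mul_le_mul_of_nonneg_right
      (mul_le_mul_of_nonneg_right (le_add_of_nonneg_right zero_le_one) hε.le) hvv0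
  have hDe : (D + 1) * ε = α / 2 := by
    rw [hεdef]; field_simp
  have h4 : (D + 1) * ε * (v ⬝ᵥ v) = α / 2 * (v ⬝ᵥ v) := by rw [hDe]
  show α / 2 * (v ⬝ᵥ v) ≤ ∑ t ∈ Finset.Icc (t0 + 1) (t0 + (T + N)), (b t ⬝ᵥ v) ^ 2
  linarith

/-- Lemma 1 (Bai–Sastry): if two bounded ℝⁿ-valued sequences satisfy
Σ_{t} ‖y₁(t) − y₂(t)‖ < ∞, then y₁ is sufficiently rich of order p iff y₂ is. -/
theorem suffRich_iff_of_summable_dist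
    (n p : ℕ) (y1 y2 : ℕ → Fin n → ℝ)
    (C1 : ℝ) (hy1 : ∀ t, ‖y1 t‖ ≤ C1)
    (C2 : ℝ) (hy2 : ∀ t, ‖y2 t‖ ≤ C2)
    (hsum : Summable fun t => ‖y1 t - y2 t‖) :
    SuffRich y1 p ↔ SuffRich y2 p := by
  constructor
  · exact myTransfer n p y1 y2 C1 hy1 C2 hy2 hsum
  · refine myTransfer n p y2 y1 C2 hy2 C1 hy1 ?_
    have he : (fun t => ‖y2 t - y1 t‖) = fun t => ‖y1 t - y2 t‖ :=
      funext fun t => norm_sub_rev _ _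
    exact he ▸ hsum
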